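/- Let R be a purely infinite simple unital ring. Then for any two non-zero idempotents p and q of R, p is subequivalent to q, i.e., there exist x ∈ pRq and y ∈ qRp with xy = p and yx ≤ q (yx an idempotent below q). -/

import Mathlib

section
variable (R : Type*) [Ring R]

/-- `p` is an infinite idempotent: there is an idempotent `q < p` with `q ∼ p`. -/
def IsInfiniteIdem (p : R) : Prop :=
  p * p = p ∧ p ≠ 0 ∧
    ∃ q x y : R, q * q = q ∧ q * p = q ∧ p * q = q ∧ q ≠ p ∧
      x = q * x * p ∧ y = p * y * q ∧ x * y = q ∧ y * x = p

/-- A subset is a right ideal of `R`. -/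
def IsRightIdealSet (J : Set R) : Prop :=
  (0 : R) ∈ J ∧ (∀ a b, a ∈ J → b ∈ J → a + b ∈ J) ∧ ∀ a r, a ∈ J → a * r ∈ J

/-- A unital ring is purely infinite simple: it is simple and every non-zero right ideal
contains an infinite idempotent. -/
def IsPurelyInfiniteSimple : Prop :=
  (∀ I : TwoSidedIdeal R, I = ⊥ ∨ I = ⊤) ∧
    ∀ J : Set R, IsRightIdealSet R J → (∃ z ∈ J, z ≠ 0) →
      ∃ p ∈ J, IsInfiniteIdem R p

/-- List induction: every sum of elements of the form `a*g*b` is "dominated". -/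
lemma pis_aux_list (p f g x y : R) (hpp : p * p = p) (hgg : g * g = g)
    (hfx : f * x = x) (hyf : y * f = y) (hyx : y * x = f)
    (hgx : g * x = 0) (hyg : y * g = 0) (hgf : g * f = g) (hfg : f * g = g) :
    ∀ L : List R, (∀ z ∈ L, ∃ a b, z = a * g * b) →
      ∃ X Y : R, p * X = X ∧ X * f = X ∧ f * Y = Y ∧ Y * p = Y ∧
        X * Y = p * L.sum * p := by
  intro L
  induction L with
  | nil =>
    intro _
    exact ⟨0, 0, by simp, by simp, by simp, by simp, by simp⟩
  | cons z t ih =>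
    intro hmem
    obtain ⟨a, b, hz⟩ := hmem z List.mem_cons_self
    obtain ⟨X₂, Y₂, hpX₂, hX₂f, hfY₂, hY₂p, hXY₂⟩ := ih fun w hw => hmem w (List.mem_cons_of_mem z hw)
    refine ⟨p * a * g + X₂ * y, g * b * p + x * Y₂, ?_, ?_, ?_, ?_, ?_⟩
    · rw [mul_add]
      congr 1
      · rw [show p * (p * a * g) = p * p * (a * g) by noncomm_ring, hpp, mul_assoc]
      · rw [← mul_assoc, hpX₂]
    · rw [add_mul]
      congr 1
      · rw [mul_assoc, hgf]
      · rw [mul_assoc, hyf]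
    · rw [mul_add]
      congr 1
      · rw [← mul_assoc, ← mul_assoc, hfg]
      · rw [← mul_assoc, hfx]
    · rw [add_mul]
      congr 1
      · rw [show g * b * p * p = g * b * (p * p) by noncomm_ring, hpp]
      · rw [mul_assoc, hY₂p]
    · have h1 : (p * a * g) * (g * b * p) = p * z * p := by
        rw [hz]
        rw [show (p * a * g) * (g * b * p) = p * a * (g * g) * b * p by noncomm_ring]
        rw [hgg]; noncomm_ring
      have h2 : (p * a * g) * (x * Y₂) = 0 := by
        rw [show (p * a * g) * (x * Y₂) = p * a * (g * x) * Y₂ by noncomm_ring, hgx]; noncomm_ring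
      have h3 : (X₂ * y) * (g * b * p) = 0 := by
        rw [show (X₂ * y) * (g * b * p) = X₂ * (y * g) * b * p by noncomm_ring, hyg]; noncomm_ring
      have h4 : (X₂ * y) * (x * Y₂) = p * t.sum * p := by
        rw [show (X₂ * y) * (x * Y₂) = X₂ * (y * x) * Y₂ by noncomm_ring, hyx,
          show X₂ * f * Y₂ = (X₂ * f) * Y₂ by noncomm_ring, hX₂f, hXY₂]
      rw [add_mul, mul_add, mul_add, h1, h2, h3, h4]
      rw [List.sum_cons, mul_add, add_mul]
      abel

/-- In a purely infinite simple unital ring any non-zero idempotent `p` is subequivalent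
to any non-zero idempotent `q`: `p = xy` with `yx` an idempotent below `q`. -/
theorem pis_subequivalence [Nontrivial R] (hR : IsPurelyInfiniteSimple R)
    (p q : R) (hp : p * p = p) (hq : q * q = q) (hp0 : p ≠ 0) (hq0 : q ≠ 0) :
    ∃ x y : R, x = p * x * q ∧ y = q * y * p ∧ x * y = p ∧
      (y * x) * (y * x) = y * x ∧ (y * x) * q = y * x ∧ q * (y * x) = y * x := by
  obtain ⟨hsimple, hPI⟩ := hR
  -- the right ideal qR
  have hJ : IsRightIdealSet R {z : R | q * z = z} :=
    ⟨mul_zero q, fun a b ha hb => by simp only [Set.mem_setOf_eq] at *; rw [mul_add, ha, hb],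
      fun a r ha => by simp only [Set.mem_setOf_eq] at *; rw [← mul_assoc, ha]⟩
  obtain ⟨e, hqe, hee, he0, e₁, u, v, he₁e₁, he₁e, hee₁, hne, hu, hv, huv, hvu⟩ :=
    hPI _ hJ ⟨q, hq, hq0⟩
  simp only [Set.mem_setOf_eq] at hqe
  -- basic consequences
  have hqe₁ : q * e₁ = e₁ := by rw [← hee₁, ← mul_assoc, hqe, hee₁]
  have hqu : q * u = u := by
    rw [hu, show q * (e₁ * u * e) = q * e₁ * u * e by noncomm_ring, hqe₁]
  have hqv : q * v = v := by
    rw [hv, show q * (e * v * e₁) = q * e * v * e₁ by noncomm_ring, hqe]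
  have heu : e * u = u := by
    rw [hu, show e * (e₁ * u * e) = e * e₁ * (u * e) by noncomm_ring, hee₁, mul_assoc]
  have he₁u : e₁ * u = u := by
    rw [hu, show e₁ * (e₁ * u * e) = e₁ * e₁ * (u * e) by noncomm_ring, he₁e₁, mul_assoc]
  have hve : v * e = v := by
    rw [hv, show e * v * e₁ * e = e * v * (e₁ * e) by noncomm_ring, he₁e]
  have hve₁ : v * e₁ = v := by
    rw [hv, show e * v * e₁ * e₁ = e * v * (e₁ * e₁) by noncomm_ring, he₁e₁]
  -- the corner idempotents
  set f : R := e * q with hf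
  set f₁ : R := e₁ * q with hf₁
  set x₀ : R := u * q with hx₀
  set y₀ : R := v * q with hy₀
  set g : R := f - f₁ with hg
  have hff : f * f = f := by rw [hf, show e * q * (e * q) = e * (q * e) * q by noncomm_ring, hqe, hee]
  have hfq : f * q = f := by rw [hf, mul_assoc, hq]
  have hqf : q * f = f := by rw [hf, ← mul_assoc, hqe]
  have hf0 : f ≠ 0 := by
    intro h
    apply he0
    have : e = e * q * e := by rw [mul_assoc, hqe, hee]
    rw [this, ← hf, h, zero_mul]
  have hf₁f₁ : f₁ * f₁ = f₁ := by
    rw [hf₁, show e₁ * q * (e₁ * q) = e₁ * (q * e₁) * q by noncomm_ring, hqe₁, he₁e₁]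
  have hf₁f : f₁ * f = f₁ := by
    rw [hf₁, hf, show e₁ * q * (e * q) = e₁ * (q * e) * q by noncomm_ring, hqe, he₁e]
  have hff₁ : f * f₁ = f₁ := by
    rw [hf₁, hf, show e * q * (e₁ * q) = e * (q * e₁) * q by noncomm_ring, hqe₁, hee₁]
  have hfne : f₁ ≠ f := by
    intro h
    apply hne
    have h1 : f₁ * e = f * e := by rw [h]
    rw [hf₁, hf, mul_assoc, hqe, mul_assoc, hqe, he₁e, hee] at h1
    exact h1
  -- the equivalence f ∼ f₁ inside the corner
  have hfx : f * x₀ = x₀ := by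
    rw [hf, hx₀, show e * q * (u * q) = e * (q * u) * q by noncomm_ring, hqu, heu]
  have hf₁x : f₁ * x₀ = x₀ := by
    rw [hf₁, hx₀, show e₁ * q * (u * q) = e₁ * (q * u) * q by noncomm_ring, hqu, he₁u]
  have hyf : y₀ * f = y₀ := by
    rw [hf, hy₀, show v * q * (e * q) = v * (q * e) * q by noncomm_ring, hqe, hve]
  have hyf₁ : y₀ * f₁ = y₀ := by
    rw [hf₁, hy₀, show v * q * (e₁ * q) = v * (q * e₁) * q by noncomm_ring, hqe₁, hve₁]
  have hyx : y₀ * x₀ = f := by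
    rw [hy₀, hx₀, hf, show v * q * (u * q) = v * (q * u) * q by noncomm_ring, hqu, hvu]
  -- g is nonzero
  have hgg : g * g = g := by rw [hg, sub_mul, mul_sub, mul_sub, hff, hff₁, hf₁f, hf₁f₁]; abel
  have hgf : g * f = g := by rw [hg, sub_mul, hff, hf₁f]
  have hfg : f * g = g := by rw [hg, mul_sub, hff, hff₁]
  have hgx : g * x₀ = 0 := by rw [hg, sub_mul, hfx, hf₁x, sub_self]
  have hyg : y₀ * g = 0 := by rw [hg, mul_sub, hyf, hyf₁, sub_self]
  have hg0 : g ≠ 0 := fun h => hfne (by rw [hg, sub_eq_zero] at h; exact h.symm)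
  -- the two-sided ideal generated by g is everything
  set T : Set R := {z : R | ∃ a b, z = a * g * b} with hT
  set M := AddSubmonoid.closure T with hM
  have hmemT : ∀ {z}, z ∈ T → z ∈ M := fun hz => AddSubmonoid.subset_closure hz
  have hneg : ∀ z ∈ M, -z ∈ M := by
    intro z hz
    induction hz using AddSubmonoid.closure_induction with
    | mem w hw =>
      obtain ⟨a, b, rfl⟩ := hw
      exact hmemT ⟨-a, b, by noncomm_ring⟩
    | zero => simpa using (AddSubmonoid.closure T).zero_mem
    | add w₁ w₂ h₁ h₂ ih₁ ih₂ => rw [neg_add]; exact (AddSubmonoid.closure T).add_mem ih₁ ih₂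
  have hleft : ∀ (r : R), ∀ z ∈ M, r * z ∈ M := by
    intro r z hz
    induction hz using AddSubmonoid.closure_induction with
    | mem w hw =>
      obtain ⟨a, b, rfl⟩ := hw
      exact hmemT ⟨r * a, b, by noncomm_ring⟩
    | zero => simpa using (AddSubmonoid.closure T).zero_mem
    | add w₁ w₂ h₁ h₂ ih₁ ih₂ => rw [mul_add]; exact (AddSubmonoid.closure T).add_mem ih₁ ih₂
  have hright : ∀ (r : R), ∀ z ∈ M, z * r ∈ M := by
    intro r z hz
    induction hz using AddSubmonoid.closure_induction with
    | mem w hw =>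
      obtain ⟨a, b, rfl⟩ := hw
      exact hmemT ⟨a, b * r, by noncomm_ring⟩
    | zero => simpa using (AddSubmonoid.closure T).zero_mem
    | add w₁ w₂ h₁ h₂ ih₁ ih₂ => rw [add_mul]; exact (AddSubmonoid.closure T).add_mem ih₁ ih₂
  set I : TwoSidedIdeal R := TwoSidedIdeal.mk' M (AddSubmonoid.closure T).zero_mem
    (fun hx hy => (AddSubmonoid.closure T).add_mem hx hy)
    (fun hx => hneg _ hx) (fun {r z} hz => hleft r z hz) (fun {z r} hz => hright r z hz) with hI
  have hgI : g ∈ I := by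
    rw [hI, TwoSidedIdeal.mem_mk']
    exact hmemT ⟨1, 1, by noncomm_ring⟩
  have honeM : (1 : R) ∈ M := by
    rcases hsimple I with h | h
    · exfalso; rw [h, TwoSidedIdeal.mem_bot] at hgI; exact hg0 hgI
    · have : (1 : R) ∈ I := h.symm ▸ TwoSidedIdeal.mem_top R
      rwa [hI, TwoSidedIdeal.mem_mk'] at this
  obtain ⟨L, hL, hLsum⟩ := AddSubmonoid.exists_list_of_mem_closure honeM
  -- assemble
  obtain ⟨X, Y, hpX, hXf, hfY, hYp, hXY⟩ :=
    pis_aux_list R p f g x₀ y₀ hp hgg hfx hyf hyx hgx hyg hgf hfg L hL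
  rw [hLsum, mul_one, hp] at hXY
  have hXq : X * q = X := by rw [← hXf, mul_assoc, hfq]
  have hqY : q * Y = Y := by rw [← hfY, ← mul_assoc, hqf]
  refine ⟨X, Y, ?_, ?_, hXY, ?_, ?_, ?_⟩
  · rw [hpX, hXq]
  · rw [mul_assoc, hYp, hqY]
  · rw [show Y * X * (Y * X) = Y * (X * Y) * X by noncomm_ring, hXY, hYp]
  · rw [mul_assoc, hXq]
  · rw [← mul_assoc, hqY]

end
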